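/- For 0 < p < 1/2, with z = p(1-p), we have sqrt(1 - 4z) = 1 - 2p, and consequently sum over i ≥ 1 of i * binom(2i, i) * (p(1-p))^i equals 2p(1-p) / (1 - 2p)^3. -/

import Mathlib

open Set

private lemma myCentralBinom_le_four_pow (n : ℕ) : Nat.centralBinom n ≤ 4 ^ n :=
  calc Nat.centralBinom n = (2*n).choose n := rfl
    _ ≤ (2*n+1).choose n := Nat.choose_le_choose n (by omega)
    _ ≤ 4 ^ n := Nat.choose_middle_le_pow n

set_option maxHeartbeats 2000000 in
theorem central_binom_series_at_p (p : ℝ) (h0 : 0 < p) (h2 : p < 1/2) :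
    Real.sqrt (1 - 4 * (p * (1 - p))) = 1 - 2 * p ∧
    ∑' i : ℕ, (i : ℝ) * (Nat.centralBinom i : ℝ) * (p * (1 - p)) ^ i
      = 2 * p * (1 - p) / (1 - 2 * p) ^ 3 := by
  have hp1 : 0 < 1 - 2*p := by linarith
  set x : ℝ := p * (1 - p) with hxdef
  have hx0 : 0 < x := by nlinarith
  have hx4 : 1 - 4 * x = (1 - 2*p)^2 := by rw [hxdef]; ring
  have hxq : x < 1/4 := by nlinarith
  refine ⟨by rw [hx4, Real.sqrt_sq hp1.le], ?_⟩
  -- Setup: radius r with x < r < 1/4, ratio q = 4r < 1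
  set r : ℝ := (x + 1/4)/2 with hrdef
  have hxr : x < r := by rw [hrdef]; linarith
  have hr4 : r < 1/4 := by rw [hrdef]; linarith
  have hr0 : 0 < r := by rw [hrdef]; linarith
  set q : ℝ := 4 * r with hqdef
  have hq0 : 0 < q := by positivity
  have hq1 : q < 1 := by rw [hqdef]; linarith
  set t : Set ℝ := Ioo (-r) r with htdef
  have hxt : x ∈ t := ⟨by linarith, hxr⟩
  have h0t : (0:ℝ) ∈ t := ⟨by linarith, hr0⟩
  have hC : ∀ n : ℕ, (Nat.centralBinom n : ℝ) ≤ 4 ^ n := by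
    intro n
    exact_mod_cast Nat.cast_le.mpr (myCentralBinom_le_four_pow n)
  have hC0 : ∀ n : ℕ, (0:ℝ) ≤ (Nat.centralBinom n : ℝ) := fun n => Nat.cast_nonneg _
  -- the series terms and their derivatives
  set g : ℕ → ℝ → ℝ := fun n y => (Nat.centralBinom n : ℝ) * y ^ n with hgdef
  set g' : ℕ → ℝ → ℝ := fun n y => (Nat.centralBinom n : ℝ) * ((n:ℝ) * y ^ (n-1)) with hgdef'
  set u : ℕ → ℝ := fun n => (4/q) * ((n:ℝ) * q ^ n) with hudef
  have hu : Summable u := by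
    have := summable_pow_mul_geometric_of_norm_lt_one (R := ℝ) 1
      (r := q) (by rw [Real.norm_eq_abs, abs_of_pos hq0]; exact hq1)
    simpa [hudef, pow_one] using this.mul_left (4/q)
  have hg : ∀ (n : ℕ) (y : ℝ), HasDerivAt (g n) (g' n y) y := fun n y =>
    (hasDerivAt_pow n y).const_mul _
  have hgbound : ∀ (n : ℕ) (y : ℝ), y ∈ t → ‖g' n y‖ ≤ u n := by
    intro n y hy
    have hyr : |y| ≤ r := le_of_lt (abs_lt.2 ⟨hy.1, hy.2⟩)
    have hyr0 : (0:ℝ) ≤ |y| := abs_nonneg y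
    cases n with
    | zero => simp [hgdef', hudef]
    | succ m =>
      have h1 : ‖g' (m+1) y‖ = (Nat.centralBinom (m+1) : ℝ) * (((m:ℝ)+1) * |y| ^ m) := by
        simp only [hgdef', Real.norm_eq_abs, abs_mul, abs_pow, Nat.abs_cast,
          Nat.add_sub_cancel, abs_of_nonneg (hC0 (m+1))]
        push_cast
        ring
      have h2 : u (m+1) = 4^(m+1) * (((m:ℝ)+1) * r ^ m) := by
        rw [hudef]
        simp only [hqdef]
        rw [mul_pow]
        field_simp
        push_cast
        ring
      rw [h1, h2]
      have hym : |y| ^ m ≤ r ^ m := pow_le_pow_left₀ hyr0 hyr m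
      have := hC (m+1)
      have h4 : (0:ℝ) < 4 ^ (m+1) := by positivity
      calc (Nat.centralBinom (m+1) : ℝ) * (((m:ℝ)+1) * |y| ^ m)
          ≤ 4^(m+1) * (((m:ℝ)+1) * |y| ^ m) := by
            apply mul_le_mul_of_nonneg_right (hC (m+1)) (by positivity)
        _ ≤ 4^(m+1) * (((m:ℝ)+1) * r ^ m) := by
            apply mul_le_mul_of_nonneg_left _ (by positivity)
            exact mul_le_mul_of_nonneg_left hym (by positivity)
  have hg0 : Summable (fun n => g n 0) := by
    apply summable_of_ne_finset_zero (s := {0})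
    intro n hn
    simp only [Finset.mem_singleton] at hn
    simp [hgdef, zero_pow hn]
  -- term-by-term differentiation
  have key : ∀ y ∈ t, HasDerivAt (fun z => ∑' n, g n z) (∑' n, g' n y) y := by
    intro y hy
    exact hasDerivAt_tsum_of_isPreconnected hu isOpen_Ioo (convex_Ioo _ _).isPreconnected
      (fun n z _ => hg n z) hgbound h0t hg0 hy
  set S : ℝ → ℝ := fun y => ∑' n, g n y with hSdef
  set D : ℝ → ℝ := fun y => ∑' n, g' n y with hDdef
  have hgsum : ∀ y ∈ t, Summable (fun n => g n y) := by
    intro y hy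
    apply Summable.of_norm_bounded (g := fun n => q ^ n)
      (summable_geometric_of_lt_one hq0.le hq1)
    intro n
    have hyr : |y| ≤ r := le_of_lt (abs_lt.2 ⟨hy.1, hy.2⟩)
    calc ‖g n y‖ = (Nat.centralBinom n : ℝ) * |y| ^ n := by
          simp [hgdef, abs_mul, abs_pow, abs_of_nonneg (hC0 n)]
      _ ≤ 4 ^ n * r ^ n := by
          apply mul_le_mul (hC n) (pow_le_pow_left₀ (abs_nonneg y) hyr n) (by positivity)
            (by positivity)
      _ = q ^ n := by rw [hqdef, mul_pow]
  have hS : ∀ y ∈ t, HasSum (fun n => g n y) (S y) := fun y hy => (hgsum y hy).hasSum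
  have hD : ∀ y ∈ t, HasSum (fun n => g' n y) (D y) := by
    intro y hy
    exact (Summable.of_norm_bounded (g := u) hu (fun n => hgbound n y hy)).hasSum
  -- the ODE: (1 - 4y) D y = 2 S y
  have hterm : ∀ (n : ℕ) (y : ℝ), 4 * y * g' n y + 2 * g n y = g' (n+1) y := by
    intro n y
    cases n with
    | zero =>
      simp [hgdef, hgdef', Nat.centralBinom]
    | succ m =>
      have hrec : (((m+1) + 1 : ℕ) : ℝ) * (Nat.centralBinom ((m+1)+1) : ℝ)
          = 2 * (2*((m:ℝ)+1) + 1) * (Nat.centralBinom (m+1) : ℝ) := by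
        exact_mod_cast congrArg (Nat.cast (R := ℝ)) (Nat.succ_mul_centralBinom_succ (m+1))
      simp only [hgdef, hgdef', Nat.add_sub_cancel]
      push_cast at hrec ⊢
      linear_combination (-(y ^ (m+1))) * hrec
  have feq : ∀ y ∈ t, (1 - 4*y) * D y = 2 * S y := by
    intro y hy
    have h1 := hD y hy
    have h1' : HasSum (fun n => g' (n+1) y) (D y) := by
      apply (hasSum_nat_add_iff (f := fun n => g' n y) 1).2
      have hz : g' 0 y = 0 := by simp [hgdef']
      simpa [hz] using h1
    have h4 : HasSum (fun n => 4 * y * g' n y + 2 * g n y) (4*y*D y + 2*S y) :=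
      (h1.mul_left (4*y)).add ((hS y hy).mul_left 2)
    have h4' : HasSum (fun n => g' (n+1) y) (4*y*D y + 2*S y) := by
      simpa [hterm] using h4
    have := h1'.unique h4'
    linarith
  -- F = S^2 * (1-4y) has zero derivative on t
  have hF : ∀ y ∈ t, HasDerivAt (fun z => (S z)^2 * (1 - 4*z)) 0 y := by
    intro y hy
    have hd1 : HasDerivAt (fun z => (S z)^2) (2 * S y * D y) y := by
      simpa [hSdef, hDdef, mul_comm] using ((key y hy).fun_pow 2)
    have hd2 : HasDerivAt (fun z : ℝ => 1 - 4*z) (-4) y := by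
      simpa using ((hasDerivAt_id y).const_mul 4).const_sub 1
    have := hd1.mul hd2
    refine this.congr_deriv (Eq.symm ?_)
    have hfe := feq y hy
    linear_combination (-2 * S y) * hfe
  -- constancy via MVT on [0, x]
  have hsub : Icc (0:ℝ) x ⊆ t := by
    intro z hz
    exact ⟨by linarith [hz.1], lt_of_le_of_lt hz.2 hxr⟩
  have hcont : ContinuousOn (fun z => (S z)^2 * (1 - 4*z)) (Icc 0 x) := by
    intro z hz
    exact ((hF z (hsub hz)).continuousAt).continuousWithinAt
  obtain ⟨c, hc, hceq⟩ := exists_hasDerivAt_eq_slope (fun z => (S z)^2 * (1 - 4*z))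
    (fun _ => 0) hx0 hcont (fun z hz => hF z (hsub ⟨hz.1.le, hz.2.le⟩))
  have hS0 : S 0 = 1 := by
    show (∑' n, g n 0) = 1
    rw [tsum_eq_single 0 (fun n hn => by simp [hgdef, zero_pow hn])]
    simp [hgdef, Nat.centralBinom]
  have hFx : (S x)^2 * (1 - 4*x) = 1 := by
    have h : ((S x)^2 * (1 - 4*x) - (S 0)^2 * (1 - 4*0)) / (x - 0) = 0 := hceq.symm
    rw [div_eq_zero_iff] at h
    rcases h with h | h
    · rw [hS0] at h
      norm_num at h
      linarith
    · exfalso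
      have : x = 0 := by linarith [h]
      linarith
  -- S x = 1 / (1 - 2p)
  have hSx_pos : 1 ≤ S x := by
    have h1 : g 0 x = 1 := by simp [hgdef, Nat.centralBinom]
    have := Summable.le_tsum (hgsum x hxt) 0 (fun j _ => by
      simp only [hgdef]; positivity)
    rw [h1] at this
    exact this
  have hne : (1 - 2*p) ≠ 0 := ne_of_gt hp1
  have hSx : S x = 1 / (1 - 2*p) := by
    rw [hx4] at hFx
    have hfac : (S x * (1 - 2*p) - 1) * (S x * (1 - 2*p) + 1) = 0 := by
      linear_combination hFx
    rcases mul_eq_zero.mp hfac with h | h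
    · field_simp
      linarith
    · exfalso
      have hpos : 0 < S x * (1 - 2*p) := mul_pos (lt_of_lt_of_le one_pos hSx_pos) hp1
      linarith
  -- D x = 2 / (1 - 2p)^3
  have hDx : D x = 2 / (1 - 2*p)^3 := by
    have h := feq x hxt
    rw [hx4, hSx] at h
    have h1 : (1 - 2*p) ≠ 0 := by linarith
    field_simp at h ⊢
    linarith [h]
  -- the final sum
  have hT : HasSum (fun n : ℕ => (n : ℝ) * (Nat.centralBinom n : ℝ) * x ^ n) (x * D x) := by
    have h := (hD x hxt).mul_left x
    have heq : (fun n : ℕ => x * g' n x)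
        = (fun n : ℕ => (n : ℝ) * (Nat.centralBinom n : ℝ) * x ^ n) := by
      funext n
      cases n with
      | zero => simp [hgdef']
      | succ m =>
        simp only [hgdef', Nat.add_sub_cancel]
        push_cast
        ring
    rwa [heq] at h
  rw [hT.tsum_eq, hDx, hxdef]
  ring
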